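/- arXiv:2412.14461 — 2 statements merged into one kernel-verified Lean document; each statement's English description precedes it below -/
import Mathlib

section
/- (Conservativeness of observed contrasts.) Under symmetric label noise with error rate e satisfying 0 ≤ e < (K−1)/K and positive class masses, for any two measurable LLM labelers ŷ₀, ŷ₁ : Ω → Fin K evaluated against the same ground truth y and the same reference r, if the co-labeling covariance does not increase, J(ŷ₁) ≤ J(ŷ₀), and the observed contrast is nonnegative, A_R(ŷ₁) ≥ A_R(ŷ₀), then the true-agreement improvement is at least as large as the observed contrast: A_T(ŷ₁) − A_T(ŷ₀) ≥ A_R(ŷ₁) − A_R(ŷ₀). In particular the observed contrast underestimates the improvement in true agreement. -/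
open MeasureTheory

/-- True agreement `A_T(ŷ) = μ({ŷ = y})`. -/
noncomputable def trueAgree {Ω : Type*} [MeasurableSpace Ω] {K : ℕ}
    (μ : Measure Ω) (y yhat : Ω → Fin K) : ℝ :=
  (μ {ω | yhat ω = y ω}).toReal

/-- Reference agreement `A_R(ŷ) = μ({ŷ = r})`. -/
noncomputable def refAgree {Ω : Type*} [MeasurableSpace Ω] {K : ℕ}
    (μ : Measure Ω) (r yhat : Ω → Fin K) : ℝ :=
  (μ {ω | yhat ω = r ω}).toReal

/-- Measurement error `ε(ŷ) = 1 − A_T(ŷ)`. -/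
noncomputable def measError {Ω : Type*} [MeasurableSpace Ω] {K : ℕ}
    (μ : Measure Ω) (y yhat : Ω → Fin K) : ℝ :=
  1 - trueAgree μ y yhat

/-- Co-labeling covariance
`J(ŷ) = ∑ₖ ∑ₗ [ μ({ŷ=ℓ}∩{r=ℓ}∩{y=k}) − μ({ŷ=ℓ}∩{y=k})·μ({r=ℓ}∩{y=k}) / μ({y=k}) ]`. -/
noncomputable def coLabelCov {Ω : Type*} [MeasurableSpace Ω] {K : ℕ}
    (μ : Measure Ω) (y r yhat : Ω → Fin K) : ℝ :=
  ∑ k : Fin K, ∑ l : Fin K,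
    ((μ ({ω | yhat ω = l} ∩ {ω | r ω = l} ∩ {ω | y ω = k})).toReal
      - (μ ({ω | yhat ω = l} ∩ {ω | y ω = k})).toReal
          * (μ ({ω | r ω = l} ∩ {ω | y ω = k})).toReal
          / (μ {ω | y ω = k}).toReal)

lemma fin_eq_meas {Ω : Type*} [MeasurableSpace Ω] {K : ℕ}
    (μ : Measure Ω) [IsFiniteMeasure μ] (f g : Ω → Fin K) (hf : Measurable f) (hg : Measurable g) :
    (μ {ω | f ω = g ω}).toReal
      = ∑ l : Fin K, (μ ({ω | f ω = l} ∩ {ω | g ω = l})).toReal := by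
  have hset : {ω | f ω = g ω} = ⋃ l : Fin K, ({ω | f ω = l} ∩ {ω | g ω = l}) := by
    ext ω
    simp only [Set.mem_setOf_eq, Set.mem_iUnion, Set.mem_inter_iff]
    constructor
    · intro h; exact ⟨g ω, h, rfl⟩
    · rintro ⟨l, h1, h2⟩; rw [h1, h2]
  have hdisj : Pairwise (Function.onFun Disjoint
      fun l : Fin K => ({ω | f ω = l} ∩ {ω | g ω = l})) := by
    intro i j hij
    simp only [Function.onFun]
    apply Set.disjoint_left.mpr
    rintro ω ⟨h1, _⟩ ⟨h2, _⟩
    exact hij (h1 ▸ h2 ▸ rfl)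
  have hmeas : ∀ l : Fin K, MeasurableSet ({ω | f ω = l} ∩ {ω | g ω = l}) :=
    fun l => (hf (measurableSet_singleton l)).inter (hg (measurableSet_singleton l))
  rw [hset, measure_iUnion hdisj hmeas, tsum_fintype,
    ENNReal.toReal_sum (fun l _ => measure_ne_top μ _)]

lemma meas_partition {Ω : Type*} [MeasurableSpace Ω] {K : ℕ}
    (μ : Measure Ω) [IsFiniteMeasure μ] (y : Ω → Fin K) (hy : Measurable y)
    (S : Set Ω) (hS : MeasurableSet S) :
    (μ S).toReal = ∑ k : Fin K, (μ (S ∩ {ω | y ω = k})).toReal := by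
  have hset : S = ⋃ k : Fin K, (S ∩ {ω | y ω = k}) := by
    ext ω
    simp only [Set.mem_iUnion, Set.mem_inter_iff, Set.mem_setOf_eq]
    constructor
    · intro h; exact ⟨y ω, h, rfl⟩
    · rintro ⟨k, h1, _⟩; exact h1
  have hdisj : Pairwise (Function.onFun Disjoint
      fun k : Fin K => (S ∩ {ω | y ω = k})) := by
    intro i j hij
    simp only [Function.onFun]
    apply Set.disjoint_left.mpr
    rintro ω ⟨_, h1⟩ ⟨_, h2⟩
    exact hij (h1 ▸ h2 ▸ rfl)
  have hmeas : ∀ k : Fin K, MeasurableSet (S ∩ {ω | y ω = k}) :=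
    fun k => hS.inter (hy (measurableSet_singleton k))
  conv_lhs => rw [hset]
  rw [measure_iUnion hdisj hmeas, tsum_fintype,
    ENNReal.toReal_sum (fun k _ => measure_ne_top μ _)]

/-- Key identity: `A_R(ŷ) = J(ŷ) + a·A_T(ŷ) + e/(K−1)`. -/
lemma key_identity {Ω : Type*} [MeasurableSpace Ω] {K : ℕ} (hK : 2 ≤ K)
    (e : ℝ)
    (μ : Measure Ω) [IsProbabilityMeasure μ]
    (y r : Ω → Fin K) (hy : Measurable y) (hr : Measurable r)
    (hnoise_diag : ∀ k : Fin K,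
      (μ ({ω | r ω = k} ∩ {ω | y ω = k})).toReal
        = (1 - e) * (μ {ω | y ω = k}).toReal)
    (hnoise_off : ∀ k l : Fin K, l ≠ k →
      (μ ({ω | r ω = l} ∩ {ω | y ω = k})).toReal
        = e / ((K : ℝ) - 1) * (μ {ω | y ω = k}).toReal)
    (hpos : ∀ k : Fin K, 0 < μ {ω | y ω = k})
    (yhat : Ω → Fin K) (hyhat : Measurable yhat) :
    refAgree μ r yhat = coLabelCov μ y r yhat
      + ((1 - e) - e / ((K : ℝ) - 1)) * trueAgree μ y yhat + e / ((K : ℝ) - 1) := by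
  set c : ℝ := e / ((K : ℝ) - 1) with hc
  have hspos : ∀ k : Fin K, (0:ℝ) < (μ {ω | y ω = k}).toReal := fun k =>
    ENNReal.toReal_pos (hpos k).ne' (measure_ne_top μ _)
  -- reference agreement as double sum of triple intersections
  have hR : refAgree μ r yhat = ∑ l : Fin K, ∑ k : Fin K,
      (μ ({ω | yhat ω = l} ∩ {ω | r ω = l} ∩ {ω | y ω = k})).toReal := by
    rw [refAgree, fin_eq_meas μ yhat r hyhat hr]
    refine Finset.sum_congr rfl fun l _ => ?_
    exact meas_partition μ y hy _
      ((hyhat (measurableSet_singleton l)).inter (hr (measurableSet_singleton l)))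
  -- true agreement as sum of diagonal terms
  have hT : trueAgree μ y yhat
      = ∑ k : Fin K, (μ ({ω | yhat ω = k} ∩ {ω | y ω = k})).toReal := by
    rw [trueAgree, fin_eq_meas μ yhat y hyhat hy]
  -- total mass: sum over l of p l k equals s k
  have hrow : ∀ k : Fin K, ∑ l : Fin K, (μ ({ω | yhat ω = l} ∩ {ω | y ω = k})).toReal
      = (μ {ω | y ω = k}).toReal := by
    intro k
    have := meas_partition μ yhat hyhat {ω | y ω = k} (hy (measurableSet_singleton k))
    rw [this]
    refine Finset.sum_congr rfl fun l _ => ?_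
    rw [Set.inter_comm]
  have htot : ∑ k : Fin K, (μ {ω | y ω = k}).toReal = 1 := by
    have := meas_partition μ y hy Set.univ MeasurableSet.univ
    simp only [Set.univ_inter, measure_univ, ENNReal.toReal_one] at this
    exact this.symm
  -- rewrite coLabelCov using noise assumptions
  have hJ : coLabelCov μ y r yhat
      = (∑ k : Fin K, ∑ l : Fin K,
          (μ ({ω | yhat ω = l} ∩ {ω | r ω = l} ∩ {ω | y ω = k})).toReal)
        - (∑ k : Fin K, ∑ l : Fin K,
          (μ ({ω | yhat ω = l} ∩ {ω | y ω = k})).toReal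
            * (if l = k then (1 - e) else c)) := by
    rw [coLabelCov, ← Finset.sum_sub_distrib]
    refine Finset.sum_congr rfl fun k _ => ?_
    rw [← Finset.sum_sub_distrib]
    refine Finset.sum_congr rfl fun l _ => ?_
    congr 1
    by_cases hlk : l = k
    · subst hlk
      rw [hnoise_diag l, if_pos rfl, mul_comm (1-e), mul_div_assoc,
        mul_div_cancel_left₀ _ (hspos l).ne']
    · rw [hnoise_off k l hlk, if_neg hlk, mul_comm c, mul_div_assoc,
        mul_div_cancel_left₀ _ (hspos k).ne']
  -- compute the weighted sum
  have hW : ∑ k : Fin K, ∑ l : Fin K,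
      (μ ({ω | yhat ω = l} ∩ {ω | y ω = k})).toReal * (if l = k then (1 - e) else c)
      = ((1 - e) - c) * trueAgree μ y yhat + c := by
    have step : ∀ k : Fin K, ∑ l : Fin K,
        (μ ({ω | yhat ω = l} ∩ {ω | y ω = k})).toReal * (if l = k then (1 - e) else c)
        = ((1 - e) - c) * (μ ({ω | yhat ω = k} ∩ {ω | y ω = k})).toReal
          + c * (μ {ω | y ω = k}).toReal := by
      intro k
      have : ∀ l : Fin K,
          (μ ({ω | yhat ω = l} ∩ {ω | y ω = k})).toReal * (if l = k then (1 - e) else c)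
          = (if l = k then ((1 - e) - c) * (μ ({ω | yhat ω = k} ∩ {ω | y ω = k})).toReal else 0)
            + c * (μ ({ω | yhat ω = l} ∩ {ω | y ω = k})).toReal := by
        intro l
        by_cases hlk : l = k
        · subst hlk; rw [if_pos rfl, if_pos rfl]; ring
        · rw [if_neg hlk, if_neg hlk]; ring
      rw [Finset.sum_congr rfl fun l _ => this l, Finset.sum_add_distrib,
        Finset.sum_ite_eq' Finset.univ k
          (fun _ => ((1 - e) - c) * (μ ({ω | yhat ω = k} ∩ {ω | y ω = k})).toReal),
        if_pos (Finset.mem_univ k), ← Finset.mul_sum, hrow k]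
    rw [Finset.sum_congr rfl fun k _ => step k, Finset.sum_add_distrib,
      ← Finset.mul_sum, hT, ← Finset.mul_sum, htot, mul_one]
  rw [hJ, hW, hR, Finset.sum_comm]
  ring

/-- **conservativeness of observed contrasts.** Under symmetric
label noise with `0 ≤ e < (K−1)/K` and positive class masses, for labelers
`ŷ₀, ŷ₁` against the same `y` and `r`, if `J(ŷ₁) ≤ J(ŷ₀)` and
`A_R(ŷ₁) ≥ A_R(ŷ₀)`, then `A_T(ŷ₁) − A_T(ŷ₀) ≥ A_R(ŷ₁) − A_R(ŷ₀)`. -/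
theorem observed_contrast_conservative
    {Ω : Type*} [MeasurableSpace Ω] {K : ℕ} (hK : 2 ≤ K)
    (e : ℝ) (he0 : 0 ≤ e) (he1 : e < ((K : ℝ) - 1) / K)
    (μ : Measure Ω) [IsProbabilityMeasure μ]
    (y r : Ω → Fin K) (hy : Measurable y) (hr : Measurable r)
    (hnoise_diag : ∀ k : Fin K,
      (μ ({ω | r ω = k} ∩ {ω | y ω = k})).toReal
        = (1 - e) * (μ {ω | y ω = k}).toReal)
    (hnoise_off : ∀ k l : Fin K, l ≠ k →
      (μ ({ω | r ω = l} ∩ {ω | y ω = k})).toReal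
        = e / ((K : ℝ) - 1) * (μ {ω | y ω = k}).toReal)
    (hpos : ∀ k : Fin K, 0 < μ {ω | y ω = k})
    (yhat₀ yhat₁ : Ω → Fin K) (hyhat₀ : Measurable yhat₀) (hyhat₁ : Measurable yhat₁) :
    coLabelCov μ y r yhat₁ ≤ coLabelCov μ y r yhat₀ →
    refAgree μ r yhat₀ ≤ refAgree μ r yhat₁ →
    refAgree μ r yhat₁ - refAgree μ r yhat₀
      ≤ trueAgree μ y yhat₁ - trueAgree μ y yhat₀ := by
  intro hJ hR
  have hK2 : (2:ℝ) ≤ (K:ℝ) := by exact_mod_cast hK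
  have hd0 : (0:ℝ) < (K:ℝ) - 1 := by linarith
  have hKpos : (0:ℝ) < (K:ℝ) := by linarith
  have heK : e * K < (K:ℝ) - 1 := (lt_div_iff₀ hKpos).mp he1
  set a : ℝ := (1 - e) - e / ((K : ℝ) - 1) with ha
  have ha0 : 0 < a := by
    have haeq : a = ((K:ℝ) - 1 - e * K) / ((K:ℝ) - 1) := by
      rw [ha, eq_div_iff hd0.ne', sub_mul, sub_mul, div_mul_cancel₀ _ hd0.ne']
      ring
    rw [haeq]
    exact div_pos (by linarith) hd0
  have ha1 : a ≤ 1 := by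
    have : 0 ≤ e / ((K:ℝ) - 1) := div_nonneg he0 hd0.le
    simp only [ha]; linarith
  have k0 := key_identity hK e μ y r hy hr hnoise_diag hnoise_off hpos yhat₀ hyhat₀
  have k1 := key_identity hK e μ y r hy hr hnoise_diag hnoise_off hpos yhat₁ hyhat₁
  have keyd : refAgree μ r yhat₁ - refAgree μ r yhat₀
      = (coLabelCov μ y r yhat₁ - coLabelCov μ y r yhat₀)
        + a * (trueAgree μ y yhat₁ - trueAgree μ y yhat₀) := by
    rw [k0, k1]; ring
  have h1 : refAgree μ r yhat₁ - refAgree μ r yhat₀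
      ≤ a * (trueAgree μ y yhat₁ - trueAgree μ y yhat₀) := by linarith
  have h2 : 0 ≤ a * (trueAgree μ y yhat₁ - trueAgree μ y yhat₀) := by linarith
  have h3 : 0 ≤ trueAgree μ y yhat₁ - trueAgree μ y yhat₀ :=
    nonneg_of_mul_nonneg_right h2 ha0
  nlinarith
end

section
/- (Vanishing co-labeling covariance under conditional independence.) Under symmetric label noise with error rate e and positive class masses, if a measurable LLM labeler ŷ : Ω → Fin K is conditionally independent of the reference r given the ground truth y, i.e. for all classes k, ℓ, ℓ′, μ({ŷ = ℓ} ∩ {r = ℓ′} ∩ {y = k})·μ({y = k}) = μ({ŷ = ℓ} ∩ {y = k})·μ({r = ℓ′} ∩ {y = k}), then the co-labeling covariance vanishes, J(ŷ) = 0, and consequently the decomposition reduces to the linear form A_R(ŷ) = a·A_T(ŷ) + b with a = (1−e) − e/(K−1) and b = e/(K−1). -/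
open MeasureTheory

private lemma part_sum {Ω : Type*} [MeasurableSpace Ω] {K : ℕ}
    (μ : Measure Ω) [IsProbabilityMeasure μ]
    (f : Ω → Fin K) (hf : Measurable f) (s : Set Ω) (hs : MeasurableSet s) :
    (μ s).toReal = ∑ k : Fin K, (μ (s ∩ {ω | f ω = k})).toReal := by
  rw [← ENNReal.toReal_sum (fun a _ => measure_ne_top μ _)]
  congr 1
  have hu : s = ⋃ k : Fin K, s ∩ {ω | f ω = k} := by
    ext ω; simp
  have hd : Pairwise (Function.onFun Disjoint fun k : Fin K => s ∩ {ω | f ω = k}) := by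
    intro i j hij
    refine Set.disjoint_left.mpr ?_
    rintro ω ⟨_, hi⟩ ⟨_, hj⟩
    exact hij (hi.symm.trans hj)
  have hm : ∀ k : Fin K, MeasurableSet (s ∩ {ω | f ω = k}) := fun k =>
    hs.inter (hf (measurableSet_singleton k))
  conv_lhs => rw [hu]
  rw [measure_iUnion hd hm, tsum_fintype]

/-- **vanishing co-labeling covariance under conditional
independence.** Under symmetric label noise with error rate `e ∈ [0,1)` and
positive class masses, if `ŷ` is conditionally independent of `r` given `y`
(i.e. `μ({ŷ=ℓ}∩{r=ℓ'}∩{y=k})·μ({y=k}) = μ({ŷ=ℓ}∩{y=k})·μ({r=ℓ'}∩{y=k})` for all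
`k, ℓ, ℓ'`), then `J(ŷ) = 0` and `A_R(ŷ) = a·A_T(ŷ) + b` with
`a = (1−e) − e/(K−1)` and `b = e/(K−1)`. -/
theorem coLabelCov_eq_zero_of_condIndep
    {Ω : Type*} [MeasurableSpace Ω] {K : ℕ} (hK : 2 ≤ K)
    (e : ℝ) (he0 : 0 ≤ e) (he1 : e < 1)
    (μ : Measure Ω) [IsProbabilityMeasure μ]
    (y r : Ω → Fin K) (hy : Measurable y) (hr : Measurable r)
    (hnoise_diag : ∀ k : Fin K,
      (μ ({ω | r ω = k} ∩ {ω | y ω = k})).toReal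
        = (1 - e) * (μ {ω | y ω = k}).toReal)
    (hnoise_off : ∀ k l : Fin K, l ≠ k →
      (μ ({ω | r ω = l} ∩ {ω | y ω = k})).toReal
        = e / ((K : ℝ) - 1) * (μ {ω | y ω = k}).toReal)
    (hpos : ∀ k : Fin K, 0 < μ {ω | y ω = k})
    (yhat : Ω → Fin K) (hyhat : Measurable yhat)
    (hindep : ∀ k l l' : Fin K,
      (μ ({ω | yhat ω = l} ∩ {ω | r ω = l'} ∩ {ω | y ω = k})).toReal
          * (μ {ω | y ω = k}).toReal
        = (μ ({ω | yhat ω = l} ∩ {ω | y ω = k})).toReal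
            * (μ ({ω | r ω = l'} ∩ {ω | y ω = k})).toReal) :
    coLabelCov μ y r yhat = 0 ∧
    refAgree μ r yhat
      = ((1 - e) - e / ((K : ℝ) - 1)) * trueAgree μ y yhat
        + e / ((K : ℝ) - 1) := by
  classical
  set c : ℝ := e / ((K : ℝ) - 1) with hc
  have hPne : ∀ k : Fin K, (μ {ω | y ω = k}).toReal ≠ 0 := fun k =>
    (ENNReal.toReal_pos (hpos k).ne' (measure_ne_top μ _)).ne'
  have hX : ∀ k l : Fin K,
      (μ ({ω | yhat ω = l} ∩ {ω | r ω = l} ∩ {ω | y ω = k})).toReal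
        = (μ ({ω | yhat ω = l} ∩ {ω | y ω = k})).toReal
            * (μ ({ω | r ω = l} ∩ {ω | y ω = k})).toReal
            / (μ {ω | y ω = k}).toReal := by
    intro k l
    rw [eq_div_iff (hPne k)]
    exact hindep k l l
  have hJ : coLabelCov μ y r yhat = 0 := by
    unfold coLabelCov
    refine Finset.sum_eq_zero fun k _ => Finset.sum_eq_zero fun l _ => ?_
    rw [hX k l]; ring
  refine ⟨hJ, ?_⟩
  -- abbreviations
  set Q : Fin K → Fin K → ℝ :=
    fun k l => (μ ({ω | yhat ω = l} ∩ {ω | y ω = k})).toReal with hQ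
  set P : Fin K → ℝ := fun k => (μ {ω | y ω = k}).toReal with hP
  have hsy : ∀ k : Fin K, MeasurableSet {ω | y ω = k} := fun k =>
    hy (measurableSet_singleton k)
  have hEqYhatR : MeasurableSet {ω | yhat ω = r ω} :=
    measurableSet_eq_fun hyhat hr
  have hEqYhatY : MeasurableSet {ω | yhat ω = y ω} :=
    measurableSet_eq_fun hyhat hy
  -- true agreement as a sum
  have hT : trueAgree μ y yhat = ∑ k : Fin K, Q k k := by
    unfold trueAgree
    rw [part_sum μ y hy _ hEqYhatY]
    refine Finset.sum_congr rfl fun k _ => ?_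
    congr 2
    ext ω
    simp only [Set.mem_inter_iff, Set.mem_setOf_eq]
    constructor
    · rintro ⟨h1, h2⟩; exact ⟨h1.trans h2, h2⟩
    · rintro ⟨h1, h2⟩; exact ⟨h1.trans h2.symm, h2⟩
  -- total mass one
  have hPsum : ∑ k : Fin K, P k = 1 := by
    have := part_sum μ y hy Set.univ MeasurableSet.univ
    simpa [Set.univ_inter] using this.symm
  -- row sums of Q
  have hQsum : ∀ k : Fin K, ∑ l : Fin K, Q k l = P k := by
    intro k
    have := part_sum μ yhat hyhat _ (hsy k)
    simp only [hQ, hP]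
    rw [this]
    exact Finset.sum_congr rfl fun l _ => by rw [Set.inter_comm]
  -- reference agreement as a double sum
  have hR : refAgree μ r yhat
      = ∑ k : Fin K, ∑ l : Fin K,
          (μ ({ω | yhat ω = l} ∩ {ω | r ω = l} ∩ {ω | y ω = k})).toReal := by
    unfold refAgree
    rw [part_sum μ y hy _ hEqYhatR]
    refine Finset.sum_congr rfl fun k _ => ?_
    rw [part_sum μ r hr _ (hEqYhatR.inter (hsy k))]
    refine Finset.sum_congr rfl fun l _ => ?_
    congr 2
    ext ω
    simp only [Set.mem_inter_iff, Set.mem_setOf_eq]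
    constructor
    · rintro ⟨⟨h1, h2⟩, h3⟩; exact ⟨⟨h1.trans h3, h3⟩, h2⟩
    · rintro ⟨⟨h1, h3⟩, h2⟩; exact ⟨⟨h1.trans h3.symm, h2⟩, h3⟩
  -- pointwise value of each term
  have hterm : ∀ k l : Fin K,
      (μ ({ω | yhat ω = l} ∩ {ω | r ω = l} ∩ {ω | y ω = k})).toReal
        = (if l = k then (1 - e) else c) * Q k l := by
    intro k l
    rw [hX k l]
    by_cases h : l = k
    · subst h
      rw [if_pos rfl, hnoise_diag l]
      field_simp [hPne l]
      ring
    · rw [if_neg h, hnoise_off k l h]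
      field_simp [hPne k]
      ring
  -- evaluate the inner sums
  have hinner : ∀ k : Fin K,
      ∑ l : Fin K, (if l = k then (1 - e) else c) * Q k l
        = c * P k + ((1 - e) - c) * Q k k := by
    intro k
    have hsplit : ∀ l : Fin K, (if l = k then (1 - e) else c) * Q k l
        = c * Q k l + (if l = k then ((1 - e) - c) * Q k l else 0) := by
      intro l
      by_cases h : l = k <;> simp [h] <;> ring
    rw [Finset.sum_congr rfl fun l _ => hsplit l, Finset.sum_add_distrib,
      ← Finset.mul_sum, hQsum k, Finset.sum_ite_eq' Finset.univ k]
    simp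
  rw [hR, hT]
  calc ∑ k : Fin K, ∑ l : Fin K,
        (μ ({ω | yhat ω = l} ∩ {ω | r ω = l} ∩ {ω | y ω = k})).toReal
      = ∑ k : Fin K, (c * P k + ((1 - e) - c) * Q k k) := by
        refine Finset.sum_congr rfl fun k _ => ?_
        rw [← hinner k]
        exact Finset.sum_congr rfl fun l _ => hterm k l
    _ = c * (∑ k : Fin K, P k) + ((1 - e) - c) * ∑ k : Fin K, Q k k := by
        rw [Finset.sum_add_distrib, ← Finset.mul_sum, ← Finset.mul_sum]
    _ = ((1 - e) - c) * (∑ k : Fin K, Q k k) + c := by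
        rw [hPsum]; ring
end
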